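/- In any LV-game on a party-list frame, suppose party P_i satisfies l ≤ ⌊k·n_i/n⌋ ≤ |P_i| and plays a lower-quota strategy with support X_i (a set of q_i = ⌊k·n_i/n⌋ of its own candidates over which the n_i·l votes of its voters are spread as evenly as possible). Then, whatever strategies the other parties play, there exists a winning committee W ∈ O(S) with X_i ⊆ W. -/

import Mathlib

open Finset

/-- A party-list election frame `F = (N, C, k, l, A)`: voters form the finite type `V`,
candidates the finite type `C`, `k` is the committee size, `l` the ballot limit, and
`A` is a party-list approval profile. -/
structure Frame (V C : Type*) [Fintype V] [DecidableEq V] [Fintype C] [DecidableEq C] where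
  k : ℕ
  l : ℕ
  A : V → Finset C
  k_le_card : k ≤ Fintype.card C
  one_le_l : 1 ≤ l
  l_le_k : l ≤ k
  A_nonempty : ∀ i, (A i).Nonempty
  A_partylist : ∀ i j : V, A i = A j ∨ A i ∩ A j = ∅

variable {V C : Type*} [Fintype V] [DecidableEq V] [Fintype C] [DecidableEq C]

/-- A strategy profile assigns to every voter a ballot; the vote count of a candidate
is the number of voters whose ballot contains it. -/
def voteCount (σ : V → Finset C) (c : C) : ℕ := (univ.filter fun i => c ∈ σ i).card

/-- The total vote count of a committee. -/
def committeeScore (σ : V → Finset C) (W : Finset C) : ℕ := ∑ c ∈ W, voteCount σ c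

/-- The outcome of a strategy profile: the size-`k` committees maximizing the sum of the
vote counts of their members. -/
def Outcome (F : Frame V C) (σ : V → Finset C) : Set (Finset C) :=
  {W | W.card = F.k ∧ ∀ W' : Finset C, W'.card = F.k → committeeScore σ W' ≤ committeeScore σ W}

/-- The utility of party `Pj`: the minimum, over winning committees `W`, of `|W ∩ Pj|`. -/
noncomputable def Util (F : Frame V C) (Pj : Finset C) (σ : V → Finset C) : ℕ :=
  sInf ((fun W => (W ∩ Pj).card) '' Outcome F σ)

/-- A strategy profile is valid when every ballot consists of exactly `l` candidates. -/
def ValidProfile (F : Frame V C) (σ : V → Finset C) : Prop := ∀ i, (σ i).card = F.l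

/-- The number of voters of party `Pj`. -/
def nVoters (F : Frame V C) (Pj : Finset C) : ℕ := (univ.filter fun i => F.A i = Pj).card

/-- The lower quota `q = ⌊k · n_j / n⌋` of party `Pj`. -/
def quota (F : Frame V C) (Pj : Finset C) : ℕ := F.k * nVoters F Pj / Fintype.card V

/-- Party `Pj` plays a lower-quota strategy with support `X` under the profile `σ`:
`X` consists of `quota F Pj` of its own candidates, every ballot of a voter of `Pj` is a
subset of `X`, and every candidate of `X` occurs in either `⌊n_j · l / q_j⌋` or
`⌈n_j · l / q_j⌉` of the ballots of the voters of `Pj`. -/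
def PlaysLQ (F : Frame V C) (σ : V → Finset C) (Pj X : Finset C) : Prop :=
  X ⊆ Pj ∧ X.card = quota F Pj ∧ (∀ i, F.A i = Pj → σ i ⊆ X) ∧
  ∀ c ∈ X,
    (univ.filter fun i => F.A i = Pj ∧ c ∈ σ i).card = nVoters F Pj * F.l / quota F Pj ∨
    (univ.filter fun i => F.A i = Pj ∧ c ∈ σ i).card =
      (nVoters F Pj * F.l + quota F Pj - 1) / quota F Pj

/-- In any LV-game on a party-list frame, if party `Pi` (with
`l ≤ ⌊k·n_i/n⌋ ≤ |P_i|`) plays a lower-quota strategy with support `X`, then whatever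
the other parties play, some winning committee contains all of `X`. -/
private lemma aux_lt_div_succ_mul (a q : ℕ) (hq : 0 < q) : a < (a / q + 1) * q := by
  have h1 := Nat.div_add_mod a q
  have h2 := Nat.mod_lt a hq
  calc a = q * (a / q) + a % q := h1.symm
    _ < q * (a / q) + q := by omega
    _ = (a / q + 1) * q := by ring

theorem stmt13 (F : Frame V C) (σ : V → Finset C) (hσ : ValidProfile F σ)
    (Pi : Finset C) (hparty : ∃ i : V, F.A i = Pi)
    (hql : F.l ≤ quota F Pi) (hqP : quota F Pi ≤ Pi.card)
    (X : Finset C) (hLQ : PlaysLQ F σ Pi X) :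
    ∃ W ∈ Outcome F σ, X ⊆ W := by
  classical
  obtain ⟨hXP, hXcard, hball, hcnt⟩ := hLQ
  obtain ⟨i0, hi0⟩ := hparty
  set k := F.k with hk
  set l := F.l with hl
  set q := quota F Pi with hqdef
  set ni := nVoters F Pi with hnidef
  set n := Fintype.card V with hndef
  set m := ni * l / q with hmdef
  have hl1 : 1 ≤ l := F.one_le_l
  have hq1 : 1 ≤ q := le_trans hl1 hql
  have hn1 : 1 ≤ n := Fintype.card_pos_iff.mpr ⟨i0⟩
  have hni1 : 1 ≤ ni := by
    have : i0 ∈ univ.filter fun i => F.A i = Pi := by simp [hi0]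
    exact Finset.card_pos.mpr ⟨i0, this⟩
  have hnin : ni ≤ n := by
    simpa [hnidef, nVoters, hndef] using Finset.card_filter_le univ (fun i => F.A i = Pi)
  have hqk : q ≤ k := by
    have h1 : k * ni ≤ k * n := Nat.mul_le_mul_left k hnin
    have h2 : k * ni / n ≤ k * n / n := Nat.div_le_div_right h1
    rw [Nat.mul_div_cancel _ (by omega)] at h2
    simpa [hqdef, quota, hnidef, hndef] using h2
  have hnq : q * n ≤ k * ni := by
    simpa [hqdef, quota, hnidef, hndef] using Nat.div_mul_le_self (k * ni) n
  have hml : ni * l < (m + 1) * q := aux_lt_div_succ_mul _ _ hq1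
  -- key arithmetic inequality
  have hkey : (n - ni) * l < (k - q + 1) * (m + 1) := by
    have h1 : (n - ni) * q ≤ (k - q) * ni := by
      have h0 : n * q ≤ k * ni := by
        calc n * q = q * n := by ring
          _ ≤ k * ni := hnq
      have : n * q - ni * q ≤ k * ni - q * ni := by
        exact tsub_le_tsub h0 (mul_comm q ni).le
      calc (n - ni) * q = n * q - ni * q := by rw [Nat.sub_mul]
        _ ≤ k * ni - q * ni := this
        _ = (k - q) * ni := by rw [Nat.sub_mul]
  -- multiply through by q
    have h2 : (n - ni) * l * q < ((k - q + 1) * (m + 1)) * q := by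
      calc (n - ni) * l * q = (n - ni) * q * l := by ring
        _ ≤ (k - q) * ni * l := Nat.mul_le_mul_right l h1
        _ = (k - q) * (ni * l) := by ring
        _ ≤ (k - q) * ((m + 1) * q) := Nat.mul_le_mul_left _ (le_of_lt hml)
        _ < (k - q) * ((m + 1) * q) + (m + 1) * q :=
            Nat.lt_add_of_pos_right (by positivity)
        _ = ((k - q + 1) * (m + 1)) * q := by ring
    exact Nat.lt_of_mul_lt_mul_right h2
  -- total number of votes
  have htot : ∑ c, voteCount σ c = n * l := by
    unfold voteCount
    rw [Finset.sum_congr rfl fun c _ => Finset.card_filter _ _]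
    rw [Finset.sum_comm]
    have : ∀ i : V, (∑ c : C, if c ∈ σ i then (1:ℕ) else 0) = l := by
      intro i
      rw [Finset.sum_ite_mem, Finset.univ_inter, Finset.sum_const, smul_eq_mul, mul_one]
      exact hσ i
    rw [Finset.sum_congr rfl fun i _ => this i, Finset.sum_const, smul_eq_mul]
    simp [hndef]
  -- votes inside X
  have hXsum : ni * l ≤ ∑ c ∈ X, voteCount σ c := by
    unfold voteCount
    rw [Finset.sum_congr rfl fun c _ => Finset.card_filter _ _]
    rw [Finset.sum_comm]
    have hterm : ∀ i ∈ univ.filter fun i => F.A i = Pi,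
        (∑ c ∈ X, if c ∈ σ i then (1:ℕ) else 0) = l := by
      intro i hi
      rw [Finset.mem_filter] at hi
      rw [Finset.sum_ite_mem, Finset.inter_eq_right.mpr (hball i hi.2), Finset.sum_const,
        smul_eq_mul, mul_one]
      exact hσ i
    calc ni * l = ∑ i ∈ univ.filter (fun i => F.A i = Pi),
          (∑ c ∈ X, if c ∈ σ i then (1:ℕ) else 0) := by
          rw [Finset.sum_congr rfl hterm, Finset.sum_const, smul_eq_mul]
          simp [hnidef, nVoters]
      _ ≤ ∑ i : V, (∑ c ∈ X, if c ∈ σ i then (1:ℕ) else 0) :=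
          Finset.sum_le_sum_of_subset (Finset.filter_subset _ _)
  -- votes outside X
  have hcomp : ∑ c ∈ univ \ X, voteCount σ c ≤ (n - ni) * l := by
    have hsplit : ∑ c ∈ univ \ X, voteCount σ c + ∑ c ∈ X, voteCount σ c
        = ∑ c, voteCount σ c := Finset.sum_sdiff (Finset.subset_univ X)
    have hnl : ni * l ≤ n * l := Nat.mul_le_mul_right l hnin
    have : ∑ c ∈ univ \ X, voteCount σ c ≤ n * l - ni * l := by omega
    calc ∑ c ∈ univ \ X, voteCount σ c ≤ n * l - ni * l := this
      _ = (n - ni) * l := (Nat.sub_mul n ni l).symm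
  -- each candidate of X has at least m votes
  have hlow : ∀ c ∈ X, m ≤ voteCount σ c := by
    intro c hc
    have hsub : (univ.filter fun i => F.A i = Pi ∧ c ∈ σ i) ⊆
        (univ.filter fun i => c ∈ σ i) :=
      Finset.monotone_filter_right _ (fun i _ h => h.2)
    have hle : (univ.filter fun i => F.A i = Pi ∧ c ∈ σ i).card ≤ voteCount σ c :=
      Finset.card_le_card hsub
    rcases hcnt c hc with h | h
    · omega
    · have : ni * l / q ≤ (ni * l + q - 1) / q := Nat.div_le_div_right (by omega)
      omega
  -- winning committees
  set Ω := (univ : Finset C).powersetCard k with hΩdef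
  have hΩmem : ∀ W : Finset C, W ∈ Ω ↔ W.card = k := fun W =>
    Finset.mem_powersetCard_univ
  have hΩne : Ω.Nonempty := Finset.powersetCard_nonempty.mpr
    (by simpa [hndef] using F.k_le_card)
  obtain ⟨W0, hW0Ω, hW0max⟩ := Ω.exists_max_image (committeeScore σ) hΩne
  set Win := Ω.filter (fun W => ∀ W' ∈ Ω, committeeScore σ W' ≤ committeeScore σ W)
    with hWindef
  have hWinne : Win.Nonempty := ⟨W0, Finset.mem_filter.mpr ⟨hW0Ω, hW0max⟩⟩
  have hWinOut : ∀ W ∈ Win, W ∈ Outcome F σ := by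
    intro W hW
    rw [Finset.mem_filter] at hW
    exact ⟨(hΩmem W).mp hW.1, fun W' hW' => hW.2 W' ((hΩmem W').mpr hW')⟩
  obtain ⟨W, hWWin, hWmin⟩ := Win.exists_min_image (fun W => (X \ W).card) hWinne
  refine ⟨W, hWinOut W hWWin, ?_⟩
  by_contra hns
  obtain ⟨c, hcX, hcW⟩ := Finset.not_subset.mp hns
  have hWf := Finset.mem_filter.mp hWWin
  have hWk : W.card = k := (hΩmem W).mp hWf.1
  have hWopt := hWf.2
  -- card of W \ X
  have hWXcard : k - q + 1 ≤ (W \ X).card := by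
    have h1 : (W ∩ X).card + (W \ X).card = W.card := Finset.card_inter_add_card_sdiff W X
    have h2 : W ∩ X ⊆ X.erase c := by
      intro x hx
      rw [Finset.mem_inter] at hx
      exact Finset.mem_erase.mpr ⟨fun h => hcW (h ▸ hx.1), hx.2⟩
    have h3 : (W ∩ X).card ≤ q - 1 := by
      have := Finset.card_le_card h2
      rwa [Finset.card_erase_of_mem hcX, hXcard] at this
    omega
  have hWXne : (W \ X).Nonempty := Finset.card_pos.mp (by omega)
  obtain ⟨d, hd, hdmin⟩ := (W \ X).exists_min_image (voteCount σ) hWXne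
  rw [Finset.mem_sdiff] at hd
  obtain ⟨hdW, hdX⟩ := hd
  by_cases hcd : voteCount σ d ≤ voteCount σ c
  · -- swap d for c: get a winning committee closer to X, contradiction with minimality
    set W' := insert c (W.erase d) with hW'def
    have hcne : c ≠ d := fun h => hdX (h ▸ hcX)
    have hcnotin : c ∉ W.erase d := fun h => hcW (Finset.mem_of_mem_erase h)
    have hW'card : W'.card = k := by
      rw [hW'def, Finset.card_insert_of_notMem hcnotin, Finset.card_erase_of_mem hdW, hWk]
      omega
    have hscore : committeeScore σ W' + voteCount σ d
        = committeeScore σ W + voteCount σ c := by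
      have he : ∑ x ∈ W.erase d, voteCount σ x + voteCount σ d = committeeScore σ W :=
        Finset.sum_erase_add W _ hdW
      have hi : committeeScore σ W' = voteCount σ c + ∑ x ∈ W.erase d, voteCount σ x := by
        rw [hW'def]; exact Finset.sum_insert hcnotin
      omega
    have hW'le : committeeScore σ W' ≤ committeeScore σ W :=
      hWopt W' ((hΩmem W').mpr hW'card)
    have hW'eq : committeeScore σ W' = committeeScore σ W := by omega
    have hW'Win : W' ∈ Win := by
      refine Finset.mem_filter.mpr ⟨(hΩmem W').mpr hW'card, fun W'' hW'' => ?_⟩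
      rw [hW'eq]; exact hWopt W'' hW''
    have hdrop : (X \ W').card < (X \ W).card := by
      have hsub : X \ W' ⊆ (X \ W).erase c := by
        intro x hx
        rw [Finset.mem_sdiff] at hx
        obtain ⟨hx1, hx2⟩ := hx
        have hxc : x ≠ c := fun h => hx2 (h ▸ Finset.mem_insert_self c _)
        have hxW : x ∉ W := by
          intro hxW
          exact hx2 (Finset.mem_insert_of_mem (Finset.mem_erase.mpr
            ⟨fun h => hdX (h ▸ hx1), hxW⟩))
        exact Finset.mem_erase.mpr ⟨hxc, Finset.mem_sdiff.mpr ⟨hx1, hxW⟩⟩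
      have hcmem : c ∈ X \ W := Finset.mem_sdiff.mpr ⟨hcX, hcW⟩
      calc (X \ W').card ≤ ((X \ W).erase c).card := Finset.card_le_card hsub
        _ = (X \ W).card - 1 := Finset.card_erase_of_mem hcmem
        _ < (X \ W).card := by
            have : 0 < (X \ W).card := Finset.card_pos.mpr ⟨c, hcmem⟩
            omega
    exact absurd (hWmin W' hW'Win) (not_le.mpr hdrop)
  · -- every member of W \ X has more than m votes: too many votes outside X
    push_neg at hcd
    have hmd : m + 1 ≤ voteCount σ d := (hlow c hcX).trans_lt hcd
    have hs1 : (W \ X).card * (m + 1) ≤ ∑ x ∈ W \ X, voteCount σ x := by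
      have := Finset.card_nsmul_le_sum (W \ X) (voteCount σ) (m + 1)
        (fun x hx => le_trans hmd (hdmin x hx))
      simpa [smul_eq_mul] using this
    have hs2 : ∑ x ∈ W \ X, voteCount σ x ≤ ∑ x ∈ univ \ X, voteCount σ x :=
      Finset.sum_le_sum_of_subset (Finset.sdiff_subset_sdiff (Finset.subset_univ W)
        (le_refl X))
    have hchain : (k - q + 1) * (m + 1) ≤ (n - ni) * l := by
      calc (k - q + 1) * (m + 1) ≤ (W \ X).card * (m + 1) :=
            Nat.mul_le_mul_right _ hWXcard
        _ ≤ ∑ x ∈ W \ X, voteCount σ x := hs1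
        _ ≤ ∑ x ∈ univ \ X, voteCount σ x := hs2
        _ ≤ (n - ni) * l := hcomp
    omega
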